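/- Let a > 1, let b ∈ (1/a, 1), let C > 0, and let K > 0. Then the function f : ℝ → ℝ defined by f(t) = -(C * t^a + K)^b is strictly concave on the interval (0, ∞). -/

import Mathlib

theorem stmt_4 (a b C K : ℝ) (ha : 1 < a) (hb : b ∈ Set.Ioo (1 / a) 1)
    (hC : 0 < C) (hK : 0 < K) :
    StrictConcaveOn ℝ (Set.Ioi (0 : ℝ)) (fun t : ℝ => -(C * t ^ a + K) ^ b) := by
  obtain ⟨hb1, hb2⟩ := hb
  have ha0 : 0 < a := lt_trans one_pos ha
  have hb0 : 0 < b := lt_trans (by positivity) hb1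
  have hab : 1 < a * b := by
    rw [div_lt_iff₀ ha0] at hb1; nlinarith
  -- positivity of the base
  have hu0 : ∀ x : ℝ, 0 < x → 0 < C * x ^ a + K := by
    intro x hx
    have : 0 < x ^ a := Real.rpow_pos_of_pos hx a
    positivity
  -- first derivative
  have hu : ∀ x ∈ Set.Ioi (0 : ℝ), HasDerivAt (fun t : ℝ => C * t ^ a + K)
      (C * (a * x ^ (a - 1))) x := by
    intro x hx
    have h1 := Real.hasDerivAt_rpow_const (x := x) (p := a) (Or.inl (ne_of_gt hx))
    exact (h1.const_mul C).add_const K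
  have hg : ∀ x ∈ Set.Ioi (0 : ℝ), HasDerivAt (fun t : ℝ => (C * t ^ a + K) ^ b)
      (b * (C * x ^ a + K) ^ (b - 1) * (C * (a * x ^ (a - 1)))) x := by
    intro x hx
    have h2 := Real.hasDerivAt_rpow_const (x := C * x ^ a + K) (p := b)
      (Or.inl (ne_of_gt (hu0 x hx)))
    exact h2.comp x (hu x hx)
  -- second derivative
  have hg2 : ∀ x ∈ Set.Ioi (0 : ℝ), HasDerivAt
      (fun t : ℝ => b * (C * t ^ a + K) ^ (b - 1) * (C * (a * t ^ (a - 1))))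
      ((b * ((b - 1) * (C * x ^ a + K) ^ (b - 2) * (C * (a * x ^ (a - 1))))) *
        (C * (a * x ^ (a - 1))) +
       (b * (C * x ^ a + K) ^ (b - 1)) * (C * (a * ((a - 1) * x ^ (a - 2))))) x := by
    intro x hx
    have h3 := Real.hasDerivAt_rpow_const (x := C * x ^ a + K) (p := b - 1)
      (Or.inl (ne_of_gt (hu0 x hx)))
    have hf1 : HasDerivAt (fun t : ℝ => b * (C * t ^ a + K) ^ (b - 1))
        (b * ((b - 1) * (C * x ^ a + K) ^ (b - 2) * (C * (a * x ^ (a - 1))))) x := by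
      have := (h3.comp x (hu x hx)).const_mul b
      rw [show (b - 1 - 1 : ℝ) = b - 2 by ring] at this
      exact this
    have hf2 : HasDerivAt (fun t : ℝ => C * (a * t ^ (a - 1)))
        (C * (a * ((a - 1) * x ^ (a - 2)))) x := by
      have h4 := Real.hasDerivAt_rpow_const (x := x) (p := a - 1) (Or.inl (ne_of_gt hx))
      have : HasDerivAt (fun t : ℝ => t ^ (a - 1)) ((a - 1) * x ^ (a - 1 - 1)) x := h4
      have h5 : a - 1 - 1 = a - 2 := by ring
      rw [h5] at this
      exact (this.const_mul a).const_mul C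
    exact hf1.mul hf2
  -- second derivative positive
  have hpos : ∀ x ∈ Set.Ioi (0 : ℝ),
      0 < (b * ((b - 1) * (C * x ^ a + K) ^ (b - 2) * (C * (a * x ^ (a - 1))))) *
        (C * (a * x ^ (a - 1))) +
       (b * (C * x ^ a + K) ^ (b - 1)) * (C * (a * ((a - 1) * x ^ (a - 2)))) := by
    intro x hx
    have hx0 : (0 : ℝ) < x := hx
    have hu' : 0 < C * x ^ a + K := hu0 x hx
    have e1 : x ^ (a - 1) * x ^ (a - 1) = x ^ a * x ^ (a - 2) := by
      rw [← Real.rpow_add hx0, ← Real.rpow_add hx0]; ring_nf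
    have e2 : (C * x ^ a + K) ^ (b - 1) = (C * x ^ a + K) ^ (b - 2) * (C * x ^ a + K) := by
      rw [show b - 1 = (b - 2) + 1 by ring, Real.rpow_add hu', Real.rpow_one]
    set A := (C * x ^ a + K) ^ (b - 2) with hA
    set s := x ^ a with hs
    set B := x ^ (a - 2) with hB
    set p := x ^ (a - 1) with hp
    have hApos : 0 < A := Real.rpow_pos_of_pos hu' _
    have hspos : 0 < s := Real.rpow_pos_of_pos hx0 _
    have hBpos : 0 < B := Real.rpow_pos_of_pos hx0 _
    have key : (b * ((b - 1) * A * (C * (a * p)))) * (C * (a * p)) +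
        (b * (A * (C * s + K))) * (C * (a * ((a - 1) * B)))
        = b * C * a * A * B * (C * s * (a * b - 1) + K * (a - 1)) := by
      have hpp : p * p = s * B := e1
      linear_combination b * C ^ 2 * a ^ 2 * A * (b - 1) * hpp
    rw [e2]
    calc (b * ((b - 1) * A * (C * (a * p)))) * (C * (a * p)) +
        (b * (A * (C * s + K))) * (C * (a * ((a - 1) * B)))
        = b * C * a * A * B * (C * s * (a * b - 1) + K * (a - 1)) := key
      _ > 0 := by
          have t1 : 0 < C * s * (a * b - 1) :=
            mul_pos (mul_pos hC hspos) (by linarith)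
          have t2 : 0 < K * (a - 1) := mul_pos hK (by linarith)
          have h1 : 0 < C * s * (a * b - 1) + K * (a - 1) := by linarith
          positivity
  -- strict convexity of g
  have key : StrictConvexOn ℝ (Set.Ioi (0 : ℝ)) (fun t : ℝ => (C * t ^ a + K) ^ b) := by
    apply strictConvexOn_of_deriv2_pos (convex_Ioi 0)
    · intro x hx
      exact ((hg x hx).continuousAt).continuousWithinAt
    · intro x hx
      rw [interior_Ioi] at hx
      have heq : Set.EqOn (deriv (fun t : ℝ => (C * t ^ a + K) ^ b))
          (fun t : ℝ => b * (C * t ^ a + K) ^ (b - 1) * (C * (a * t ^ (a - 1))))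
          (Set.Ioi (0 : ℝ)) := fun y hy => (hg y hy).deriv
      have hnhds : Set.Ioi (0 : ℝ) ∈ nhds x := (isOpen_Ioi).mem_nhds hx
      have : deriv (deriv (fun t : ℝ => (C * t ^ a + K) ^ b)) x =
          deriv (fun t : ℝ => b * (C * t ^ a + K) ^ (b - 1) * (C * (a * t ^ (a - 1)))) x := by
        apply Filter.EventuallyEq.deriv_eq
        exact Filter.eventuallyEq_of_mem hnhds heq
      simp only [Function.iterate_succ, Function.iterate_zero, Function.comp_apply, id]
      rw [this, (hg2 x hx).deriv]
      exact hpos x hx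
  exact key.neg
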